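/- Let p ≥ 0 be an integer, let n* > 0 with n* ≠ 1, let ε > 0, and let κ : (n*−ε, n*+ε) → ℂ be a continuous ITE trajectory, i.e. F_p(κ(n), n) = 0 for all n. Suppose Im κ(n) ≠ 0 for every n ≠ n*, while κ(n*) ∈ ℝ and κ(n*) ≠ 0. Then J_p(κ(n*)) = 0 and J_p(√n*·κ(n*)) = 0; in particular κ(n*) and √n*·κ(n*) are square roots of Dirichlet eigenvalues of the negative Laplacian on the unit disk. -/

import Mathlib

open Complex Real Filter Set

/-- Bessel function of the first kind of integer order `p`. -/
noncomputable def besselJ (p : ℕ) (z : ℂ) : ℂ :=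
  ∑' m : ℕ, ((-1 : ℂ) ^ m / ((Nat.factorial m : ℂ) * (Nat.factorial (m + p) : ℂ)))
    * (z / 2) ^ (2 * m + p)

/-- Derivative of the Bessel function. -/
noncomputable def besselJ' (p : ℕ) (z : ℂ) : ℂ := deriv (besselJ p) z

/-- The ITE determinant function `F_p(κ, n)`. -/
noncomputable def Fp (p : ℕ) (κ : ℂ) (n : ℝ) : ℂ :=
  κ * (besselJ' p κ * besselJ p ((Real.sqrt n : ℂ) * κ)
    - (Real.sqrt n : ℂ) * besselJ p κ * besselJ' p ((Real.sqrt n : ℂ) * κ))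

open Topology

noncomputable def bc (p m : ℕ) : ℂ :=
  (-1) ^ m / ((Nat.factorial m : ℂ) * (Nat.factorial (m + p) : ℂ)) / 2 ^ (2 * m + p)

lemma norm_bc (p m : ℕ) :
    ‖bc p m‖ = 1 / ((Nat.factorial m : ℝ) * (Nat.factorial (m+p) : ℝ) * 2 ^ (2*m+p)) := by
  rw [bc, norm_div, norm_div, norm_pow, norm_neg, norm_one, one_pow, norm_mul]
  simp [Complex.norm_natCast]
  ring

lemma norm_bc_le (p m : ℕ) : ‖bc p m‖ ≤ 1 / (Nat.factorial m : ℝ) := by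
  have h1 : (1:ℝ) ≤ (Nat.factorial (m+p) : ℝ) := by
    exact_mod_cast Nat.one_le_iff_ne_zero.2 (Nat.factorial_ne_zero _)
  have h2 : (1:ℝ) ≤ (2:ℝ) ^ (2*m+p) := one_le_pow₀ one_le_two
  have hm : (0:ℝ) < (Nat.factorial m : ℝ) := by exact_mod_cast Nat.factorial_pos m
  rw [norm_bc, div_le_div_iff₀ (by positivity) hm]
  nlinarith [mul_le_mul_of_nonneg_left h1 hm.le,
    mul_le_mul_of_nonneg_left h2 (by positivity : (0:ℝ) ≤ (Nat.factorial m : ℝ) * (Nat.factorial (m+p) : ℝ))]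

lemma nat_ineq (p m : ℕ) : (2*m+p+1 : ℝ) ≤ (p+2) * 2 ^ m := by
  induction m with
  | zero => push_cast; nlinarith [Nat.cast_nonneg (α := ℝ) p]
  | succ m ih =>
      have h2 : (2:ℝ) ≤ (p+2) * 2 ^ m := by
        have : (1:ℝ) ≤ (2:ℝ)^m := one_le_pow₀ one_le_two
        nlinarith [Nat.cast_nonneg (α := ℝ) p]
      push_cast at ih ⊢
      rw [pow_succ]
      nlinarith

lemma summable_bound (p : ℕ) (r : ℝ) (hr : 1 ≤ r) :
    Summable (fun m : ℕ => (2*m+p+1 : ℝ)^3 * r^(2*m+p) / (Nat.factorial m : ℝ)) := by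
  have hr0 : (0:ℝ) < r := lt_of_lt_of_le one_pos hr
  have hg : Summable (fun m : ℕ => ((p+2:ℝ)^3 * r^p) * ((8*r^2) ^ m / (Nat.factorial m : ℝ))) :=
    (Real.summable_pow_div_factorial (8*r^2)).mul_left _
  refine Summable.of_nonneg_of_le (fun m => by positivity) (fun m => ?_) hg
  have hm : (0:ℝ) < (Nat.factorial m : ℝ) := by exact_mod_cast Nat.factorial_pos m
  have key : (2*m+p+1 : ℝ)^3 * r^(2*m+p) ≤ (p+2:ℝ)^3 * r^p * (8*r^2)^m := by
    have e1 : (2*m+p+1 : ℝ)^3 * r^(2*m+p) = (2*m+p+1 : ℝ)^3 * (r^p * (r^2)^m) := by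
      rw [← pow_mul, ← pow_add]; ring_nf
    have e2 : (p+2:ℝ)^3 * r^p * (8*r^2)^m = ((p+2:ℝ)^3 * 8^m) * (r^p * (r^2)^m) := by
      rw [mul_pow]; ring
    rw [e1, e2]
    apply mul_le_mul_of_nonneg_right _ (by positivity)
    calc (2*m+p+1 : ℝ)^3 ≤ ((p+2) * 2^m)^3 := by
            apply pow_le_pow_left₀ (by positivity) (nat_ineq p m)
      _ = (p+2:ℝ)^3 * 8^m := by
            rw [mul_pow, ← pow_mul, mul_comm m 3, pow_mul]; norm_num
  calc (2*m+p+1 : ℝ)^3 * r^(2*m+p) / (Nat.factorial m : ℝ)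
      ≤ ((p+2:ℝ)^3 * r^p * (8*r^2)^m) / (Nat.factorial m : ℝ) := by gcongr
    _ = ((p+2:ℝ)^3 * r^p) * ((8*r^2) ^ m / (Nat.factorial m : ℝ)) := by ring

lemma summable_series (p : ℕ) (b : ℕ → ℂ) (e : ℕ → ℕ)
    (hb : ∀ m, ‖b m‖ * ((e m : ℝ) + 1) ≤ (2*m+p+1 : ℝ)^3 / (Nat.factorial m : ℝ))
    (he : ∀ m, e m ≤ 2*m+p) (w : ℂ) :
    Summable (fun m : ℕ => b m * w ^ e m) := by
  set r : ℝ := ‖w‖ + 1 with hrdef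
  have hr : 1 ≤ r := by rw [hrdef]; linarith [norm_nonneg w]
  have hr0 : 0 < r := lt_of_lt_of_le one_pos hr
  refine Summable.of_norm ?_
  refine Summable.of_nonneg_of_le (fun m => norm_nonneg _)
    (fun m => ?_) (summable_bound p r hr)
  have hm : (0:ℝ) < (Nat.factorial m : ℝ) := by exact_mod_cast Nat.factorial_pos m
  rw [norm_mul, norm_pow]
  have h1 : ‖w‖ ^ (e m) ≤ r ^ (2*m+p) := by
    calc ‖w‖ ^ (e m) ≤ r ^ (e m) := by
          apply pow_le_pow_left₀ (norm_nonneg w); simp [hrdef]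
      _ ≤ r ^ (2*m+p) := pow_le_pow_right₀ hr (he m)
  have h2 : ‖b m‖ ≤ (2*m+p+1 : ℝ)^3 / (Nat.factorial m : ℝ) := by
    have := hb m
    nlinarith [norm_nonneg (b m), Nat.cast_nonneg (α := ℝ) (e m)]
  calc ‖b m‖ * ‖w‖ ^ (e m) ≤ ((2*m+p+1 : ℝ)^3 / (Nat.factorial m : ℝ)) * r ^ (2*m+p) := by
        apply mul_le_mul h2 h1 (by positivity) (by positivity)
    _ = (2*m+p+1 : ℝ)^3 * r^(2*m+p) / (Nat.factorial m : ℝ) := by ring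

lemma hasDerivAt_series (p : ℕ) (b : ℕ → ℂ) (e : ℕ → ℕ)
    (hb : ∀ m, ‖b m‖ * ((e m : ℝ) + 1) ≤ (2*m+p+1 : ℝ)^3 / (Nat.factorial m : ℝ))
    (he : ∀ m, e m ≤ 2*m+p) (z : ℂ) :
    HasDerivAt (fun w : ℂ => ∑' m, b m * w ^ e m)
      (∑' m, b m * (e m : ℂ) * z ^ (e m - 1)) z := by
  set r : ℝ := ‖z‖ + 1 with hrdef
  have hr : 1 ≤ r := by rw [hrdef]; linarith [norm_nonneg z]
  have hr0 : 0 < r := lt_of_lt_of_le one_pos hr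
  have hmem : z ∈ Metric.ball (0:ℂ) r := by
    simp [hrdef, Complex.dist_eq]
  have hu : Summable (fun m : ℕ => (2*m+p+1 : ℝ)^3 * r^(2*m+p) / (Nat.factorial m : ℝ)) :=
    summable_bound p r hr
  have hbound : ∀ (m : ℕ) (x : ℂ), x ∈ Metric.ball (0:ℂ) r →
      ‖b m * (e m : ℂ) * x ^ (e m - 1)‖ ≤ (2*m+p+1 : ℝ)^3 * r^(2*m+p) / (Nat.factorial m : ℝ) := by
    intro m x hx
    have hxr : ‖x‖ ≤ r := by
      simp [Metric.mem_ball, Complex.dist_eq] at hx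
      simpa using hx.le
    have hm : (0:ℝ) < (Nat.factorial m : ℝ) := by exact_mod_cast Nat.factorial_pos m
    rw [norm_mul, norm_mul, norm_pow]
    have h1 : ‖x‖ ^ (e m - 1) ≤ r ^ (2*m+p) := by
      calc ‖x‖ ^ (e m - 1) ≤ r ^ (e m - 1) := pow_le_pow_left₀ (norm_nonneg x) hxr _
        _ ≤ r ^ (2*m+p) := pow_le_pow_right₀ hr (le_trans (Nat.sub_le _ _) (he m))
    have h2 : ‖b m‖ * ‖(e m : ℂ)‖ ≤ (2*m+p+1 : ℝ)^3 / (Nat.factorial m : ℝ) := by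
      have h3 := hb m
      have : ‖(e m : ℂ)‖ = (e m : ℝ) := by simp
      rw [this]
      nlinarith [norm_nonneg (b m)]
    calc ‖b m‖ * ‖(e m : ℂ)‖ * ‖x‖ ^ (e m - 1)
        ≤ ((2*m+p+1 : ℝ)^3 / (Nat.factorial m : ℝ)) * r ^ (2*m+p) :=
          mul_le_mul h2 h1 (by positivity) (by positivity)
      _ = (2*m+p+1 : ℝ)^3 * r^(2*m+p) / (Nat.factorial m : ℝ) := by ring
  refine hasDerivAt_of_tendstoUniformlyOn (f := fun (N : ℕ) (x : ℂ) => ∑ m ∈ Finset.range N, b m * x ^ e m)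
    (f' := fun (N : ℕ) (x : ℂ) => ∑ m ∈ Finset.range N, b m * (e m : ℂ) * x ^ (e m - 1))
    Metric.isOpen_ball (tendstoUniformlyOn_tsum_nat hu hbound) ?_ ?_ hmem
  · filter_upwards with N x _
    apply HasDerivAt.fun_sum
    intro m _
    have := (hasDerivAt_pow (e m) x).const_mul (b m)
    exact this.congr_deriv (by ring)
  · intro x hx
    exact ((summable_series p b e hb he x).hasSum).tendsto_sum_nat

noncomputable def bJ1 (p : ℕ) (z : ℂ) : ℂ := ∑' m : ℕ, bc p m * ((2*m+p : ℕ) : ℂ) * z ^ (2*m+p-1)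
noncomputable def bJ2 (p : ℕ) (z : ℂ) : ℂ :=
  ∑' m : ℕ, bc p m * ((2*m+p : ℕ) : ℂ) * ((2*m+p-1 : ℕ) : ℂ) * z ^ (2*m+p-1-1)
noncomputable def bG (p : ℕ) (z : ℂ) : ℂ := ∑' m : ℕ, bc p m * z ^ (2*m)

lemma besselJ_eq (p : ℕ) (z : ℂ) : besselJ p z = ∑' m : ℕ, bc p m * z ^ (2*m+p) := by
  unfold besselJ bc
  congr 1; funext m
  rw [div_pow, div_div]
  ring

-- bounds for (b,e) = (bc p, fun m => 2m+p)
lemma hb0 (p : ℕ) : ∀ m, ‖bc p m‖ * (((2*m+p : ℕ) : ℝ) + 1) ≤ (2*m+p+1 : ℝ)^3 / (Nat.factorial m : ℝ) := by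
  intro m
  have h := norm_bc_le p m
  have hm : (0:ℝ) < (Nat.factorial m : ℝ) := by exact_mod_cast Nat.factorial_pos m
  have h1 : (1:ℝ) ≤ (2*m+p+1 : ℝ) := by linarith [Nat.cast_nonneg (α := ℝ) m, Nat.cast_nonneg (α := ℝ) p]
  have : ((2*m+p : ℕ) : ℝ) + 1 = (2*m+p+1 : ℝ) := by push_cast; ring
  rw [this]
  calc ‖bc p m‖ * (2*m+p+1 : ℝ) ≤ (1 / (Nat.factorial m : ℝ)) * (2*m+p+1 : ℝ) := by
        apply mul_le_mul_of_nonneg_right h (by positivity)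
    _ ≤ (2*m+p+1 : ℝ)^3 / (Nat.factorial m : ℝ) := by
        rw [div_mul_eq_mul_div, one_mul, div_le_div_iff₀ hm hm]
        have hx3 : (2*m+p+1 : ℝ) ≤ (2*m+p+1 : ℝ)^3 := by nlinarith [h1, sq_nonneg ((2*m:ℝ)+p+1)]
        nlinarith [mul_le_mul_of_nonneg_right hx3 hm.le]
  
lemma hasDerivAt_besselJ (p : ℕ) (z : ℂ) : HasDerivAt (besselJ p) (bJ1 p z) z := by
  have := hasDerivAt_series p (bc p) (fun m => 2*m+p) (hb0 p) (fun m => le_refl _) z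
  have hfun : (fun w : ℂ => ∑' m : ℕ, bc p m * w ^ (2*m+p)) = besselJ p := by
    funext w; rw [besselJ_eq]
  rwa [hfun] at this

lemma hb1 (p : ℕ) : ∀ m, ‖bc p m * ((2*m+p : ℕ) : ℂ)‖ * (((2*m+p-1 : ℕ):ℝ) + 1) ≤ (2*m+p+1 : ℝ)^3 / (Nat.factorial m : ℝ) := by
  intro m
  have h := norm_bc_le p m
  have hm : (0:ℝ) < (Nat.factorial m : ℝ) := by exact_mod_cast Nat.factorial_pos m
  rw [norm_mul]
  have he1 : ‖((2*m+p : ℕ) : ℂ)‖ = ((2*m+p : ℕ) : ℝ) := Complex.norm_natCast _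
  have he2 : ((2*m+p : ℕ) : ℝ) ≤ (2*m+p+1 : ℝ) := by push_cast; linarith
  have he3 : (((2*m+p-1 : ℕ):ℝ) + 1) ≤ (2*m+p+1 : ℝ) := by
    have : ((2*m+p-1 : ℕ):ℝ) ≤ ((2*m+p : ℕ):ℝ) := by exact_mod_cast Nat.sub_le _ _
    push_cast at this ⊢
    -- 2m+p-1 ≤ 2m+p so +1 ≤ 2m+p+1... careful: need (↑(2m+p-1)+1 ≤ 2m+p+1)
    linarith
  rw [he1]
  have hnn : (0:ℝ) ≤ ((2*m+p:ℕ):ℝ) := Nat.cast_nonneg _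
  have h1 : (0:ℝ) ≤ (2*m+p+1 : ℝ) := by positivity
  calc ‖bc p m‖ * ((2*m+p : ℕ) : ℝ) * (((2*m+p-1 : ℕ):ℝ) + 1)
      ≤ (1 / (Nat.factorial m : ℝ)) * (2*m+p+1 : ℝ) * (2*m+p+1 : ℝ) := by
        apply mul_le_mul _ he3 (by positivity) (by positivity)
        apply mul_le_mul h he2 hnn (by positivity)
    _ ≤ (2*m+p+1 : ℝ)^3 / (Nat.factorial m : ℝ) := by
        rw [div_mul_eq_mul_div, one_mul, div_mul_eq_mul_div, div_le_div_iff₀ hm hm]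
        have h1 : (1:ℝ) ≤ (2*m+p+1 : ℝ) := by linarith [Nat.cast_nonneg (α := ℝ) m, Nat.cast_nonneg (α := ℝ) p]
        have hx3 : (2*m+p+1 : ℝ)*(2*m+p+1 : ℝ) ≤ (2*m+p+1 : ℝ)^3 := by nlinarith [h1, sq_nonneg ((2*m:ℝ)+p+1)]
        nlinarith [mul_le_mul_of_nonneg_right hx3 hm.le]
  
lemma hasDerivAt_bJ1 (p : ℕ) (z : ℂ) : HasDerivAt (bJ1 p) (bJ2 p z) z := by
  have := hasDerivAt_series p (fun m => bc p m * ((2*m+p : ℕ) : ℂ)) (fun m => 2*m+p-1)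
    (hb1 p) (fun m => le_trans (Nat.sub_le _ _) (le_refl _)) z
  exact this

lemma hb2 (p : ℕ) : ∀ m, ‖bc p m‖ * (((2*m : ℕ) : ℝ) + 1) ≤ (2*m+p+1 : ℝ)^3 / (Nat.factorial m : ℝ) := by
  intro m
  have h := norm_bc_le p m
  have hm : (0:ℝ) < (Nat.factorial m : ℝ) := by exact_mod_cast Nat.factorial_pos m
  have he2 : ((2*m : ℕ) : ℝ) + 1 ≤ (2*m+p+1 : ℝ) := by push_cast; linarith [Nat.cast_nonneg (α := ℝ) p]
  calc ‖bc p m‖ * (((2*m : ℕ) : ℝ) + 1) ≤ (1 / (Nat.factorial m : ℝ)) * (2*m+p+1 : ℝ) := by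
        apply mul_le_mul h he2 (by positivity) (by positivity)
    _ ≤ (2*m+p+1 : ℝ)^3 / (Nat.factorial m : ℝ) := by
        rw [div_mul_eq_mul_div, one_mul, div_le_div_iff₀ hm hm]
        have h1 : (1:ℝ) ≤ (2*m+p+1 : ℝ) := by linarith [Nat.cast_nonneg (α := ℝ) m, Nat.cast_nonneg (α := ℝ) p]
        have hx3 : (2*m+p+1 : ℝ) ≤ (2*m+p+1 : ℝ)^3 := by nlinarith [h1, sq_nonneg ((2*m:ℝ)+p+1)]
        nlinarith [mul_le_mul_of_nonneg_right hx3 hm.le]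

lemma hasDerivAt_bG (p : ℕ) (z : ℂ) :
    HasDerivAt (bG p) (∑' m : ℕ, bc p m * ((2*m : ℕ) : ℂ) * z ^ (2*m-1)) z := by
  have := hasDerivAt_series p (bc p) (fun m => 2*m) (hb2 p) (fun m => Nat.le_add_right _ _) z
  exact this

lemma summable_besselJ (p : ℕ) (w : ℂ) : Summable (fun m : ℕ => bc p m * w ^ (2*m+p)) :=
  summable_series p (bc p) (fun m => 2*m+p) (hb0 p) (fun m => le_refl _) w

lemma summable_bJ1 (p : ℕ) (w : ℂ) : Summable (fun m : ℕ => bc p m * ((2*m+p:ℕ):ℂ) * w ^ (2*m+p-1)) :=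
  summable_series p (fun m => bc p m * ((2*m+p : ℕ) : ℂ)) (fun m => 2*m+p-1) (hb1 p)
    (fun m => Nat.sub_le _ _ |>.trans (le_refl _)) w

lemma besselJ'_eq (p : ℕ) : besselJ' p = bJ1 p :=
  funext fun z => (hasDerivAt_besselJ p z).deriv

lemma besselJ_diff (p : ℕ) : Differentiable ℂ (besselJ p) :=
  fun z => (hasDerivAt_besselJ p z).differentiableAt

lemma bJ1_diff (p : ℕ) : Differentiable ℂ (bJ1 p) :=
  fun z => (hasDerivAt_bJ1 p z).differentiableAt

-- summability of bJ2-type series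
lemma summable_bJ2 (p : ℕ) (w : ℂ) :
    Summable (fun m : ℕ => bc p m * ((2*m+p:ℕ):ℂ) * ((2*m+p-1:ℕ):ℂ) * w ^ (2*m+p-1-1)) := by
  have := summable_series p
    (fun m => bc p m * ((2*m+p:ℕ):ℂ) * ((2*m+p-1:ℕ):ℂ)) (fun m => 2*m+p-1-1) ?_ ?_ w
  · exact this
  · intro m
    have h := norm_bc_le p m
    have hm : (0:ℝ) < (Nat.factorial m : ℝ) := by exact_mod_cast Nat.factorial_pos m
    have h1 : (1:ℝ) ≤ (2*m+p+1 : ℝ) := by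
      linarith [Nat.cast_nonneg (α := ℝ) m, Nat.cast_nonneg (α := ℝ) p]
    rw [norm_mul, norm_mul, Complex.norm_natCast, Complex.norm_natCast]
    have c1 : ((2*m+p:ℕ):ℝ) ≤ (2*m+p+1:ℝ) := by push_cast; linarith
    have c2 : ((2*m+p-1:ℕ):ℝ) ≤ (2*m+p+1:ℝ) := by
      have : ((2*m+p-1:ℕ):ℝ) ≤ ((2*m+p:ℕ):ℝ) := by exact_mod_cast Nat.sub_le _ _
      linarith
    have c3 : ((2*m+p-1-1:ℕ):ℝ) + 1 ≤ (2*m+p+1:ℝ) := by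
      have : ((2*m+p-1-1:ℕ):ℝ) ≤ ((2*m+p:ℕ):ℝ) := by
        exact_mod_cast le_trans (Nat.sub_le _ _) (Nat.sub_le _ _)
      push_cast at this; linarith
    calc ‖bc p m‖ * ((2*m+p:ℕ):ℝ) * ((2*m+p-1:ℕ):ℝ) * (((2*m+p-1-1:ℕ):ℝ) + 1)
        ≤ (1/(Nat.factorial m : ℝ)) * (2*m+p+1:ℝ) * (2*m+p+1:ℝ) * (2*m+p+1:ℝ) := by
          apply mul_le_mul _ c3 (by positivity) (by positivity)
          apply mul_le_mul _ c2 (Nat.cast_nonneg _) (by positivity)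
          apply mul_le_mul h c1 (Nat.cast_nonneg _) (by positivity)
      _ = (2*m+p+1 : ℝ)^3 / (Nat.factorial m : ℝ) := by ring
  · intro m
    exact le_trans (Nat.sub_le _ _) (le_trans (Nat.sub_le _ _) (le_refl _))

lemma per_term (A z : ℂ) (q k : ℕ) :
    z^2*(A*(k:ℂ)*((k-1:ℕ):ℂ)*z^(k-1-1)) + z*(A*(k:ℂ)*z^(k-1)) + (z^2-(q:ℂ)^2)*(A*z^k)
      = A*z^(k+2) + (((k:ℂ))^2 - (q:ℂ)^2)*A*z^k := by
  match k with
  | 0 => norm_num; ring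
  | 1 => norm_num; ring
  | (n+2) =>
      have e1 : (n+2) - 1 - 1 = n := rfl
      have e2 : (n+2) - 1 = n+1 := rfl
      rw [e1, e2]
      push_cast
      ring

lemma bc_rec (p m : ℕ) : ((4*(m+1)*(m+1+p) : ℕ) : ℂ) * bc p (m+1) = - bc p m := by
  have f1 : (Nat.factorial (m+1) : ℂ) = (m+1) * (Nat.factorial m : ℂ) := by
    rw [Nat.factorial_succ]; push_cast; ring
  have f2 : (Nat.factorial (m+1+p) : ℂ) = (m+1+p) * (Nat.factorial (m+p) : ℂ) := by
    have : m+1+p = (m+p)+1 := by ring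
    rw [this, Nat.factorial_succ]; push_cast; ring
  have f3 : (2:ℂ) ^ (2*(m+1)+p) = 4 * 2 ^ (2*m+p) := by
    have : 2*(m+1)+p = (2*m+p)+2 := by ring
    rw [this, pow_add]; ring
  have hm0 : (Nat.factorial m : ℂ) ≠ 0 := by exact_mod_cast Nat.factorial_ne_zero m
  have hmp0 : (Nat.factorial (m+p) : ℂ) ≠ 0 := by exact_mod_cast Nat.factorial_ne_zero (m+p)
  have h2 : (2:ℂ) ^ (2*m+p) ≠ 0 := pow_ne_zero _ two_ne_zero
  have hm1 : ((m:ℂ)+1) ≠ 0 := Nat.cast_add_one_ne_zero m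
  have hm1p : ((m:ℂ)+1+p) ≠ 0 := by
    have h : ((m+1+p : ℕ) : ℂ) ≠ 0 := Nat.cast_ne_zero.2 (by omega)
    push_cast at h; exact h
  unfold bc
  rw [f1, f2, f3, pow_succ]
  push_cast
  field_simp

lemma summable_f (p : ℕ) (z : ℂ) : Summable (fun m : ℕ => bc p m * z^(2*m+p+2)) := by
  apply Summable.congr ((summable_besselJ p z).mul_right (z^2))
  intro m
  rw [mul_comm (bc p m * z^(2*m+p)) (z^2), ← mul_assoc, mul_comm (z^2) (bc p m), mul_assoc, ← pow_add, add_comm 2 (2*m+p)]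

lemma summable_g (p : ℕ) (z : ℂ) :
    Summable (fun m : ℕ => ((4*m*(m+p) : ℕ):ℂ) * bc p m * z^(2*m+p)) := by
  apply summable_series p (fun m => ((4*m*(m+p) : ℕ):ℂ) * bc p m) (fun m => 2*m+p) ?_ (fun m => le_refl _) z
  intro m
  have h := norm_bc_le p m
  have hm : (0:ℝ) < (Nat.factorial m : ℝ) := by exact_mod_cast Nat.factorial_pos m
  rw [norm_mul, Complex.norm_natCast]
  have h1 : (1:ℝ) ≤ (2*m+p+1 : ℝ) := by
    linarith [Nat.cast_nonneg (α := ℝ) m, Nat.cast_nonneg (α := ℝ) p]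
  have c1 : ((4*m*(m+p):ℕ):ℝ) ≤ (2*m+p+1:ℝ)^2 := by push_cast; nlinarith [sq_nonneg (p:ℝ)]
  have c2 : ((2*m+p:ℕ):ℝ) + 1 = (2*m+p+1:ℝ) := by push_cast; ring
  rw [c2]
  calc ((4*m*(m+p):ℕ):ℝ) * ‖bc p m‖ * (2*m+p+1:ℝ)
      ≤ (2*m+p+1:ℝ)^2 * (1/(Nat.factorial m : ℝ)) * (2*m+p+1:ℝ) := by
        apply mul_le_mul_of_nonneg_right _ (by positivity)
        apply mul_le_mul c1 h (norm_nonneg _) (by positivity)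
    _ = (2*m+p+1 : ℝ)^3 / (Nat.factorial m : ℝ) := by ring

lemma bessel_ode (p : ℕ) (z : ℂ) :
    z^2 * bJ2 p z + z * bJ1 p z + (z^2 - (p:ℂ)^2) * besselJ p z = 0 := by
  rw [besselJ_eq, bJ1, bJ2]
  rw [← tsum_mul_left, ← tsum_mul_left, ← tsum_mul_left]
  have S2 : Summable (fun m : ℕ => z^2 * (bc p m * ((2*m+p:ℕ):ℂ) * ((2*m+p-1:ℕ):ℂ) * z^(2*m+p-1-1))) :=
    (summable_bJ2 p z).mul_left _
  have S1 : Summable (fun m : ℕ => z * (bc p m * ((2*m+p:ℕ):ℂ) * z^(2*m+p-1))) :=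
    (summable_bJ1 p z).mul_left _
  have S0 : Summable (fun m : ℕ => (z^2 - (p:ℂ)^2) * (bc p m * z^(2*m+p))) :=
    (summable_besselJ p z).mul_left _
  rw [← Summable.tsum_add S2 S1, ← Summable.tsum_add (S2.add S1) S0]
  have hterm : ∀ m : ℕ,
      z^2 * (bc p m * ((2*m+p:ℕ):ℂ) * ((2*m+p-1:ℕ):ℂ) * z^(2*m+p-1-1))
        + z * (bc p m * ((2*m+p:ℕ):ℂ) * z^(2*m+p-1)) + (z^2-(p:ℂ)^2) * (bc p m * z^(2*m+p))
      = bc p m * z^(2*m+p+2) + ((4*m*(m+p) : ℕ):ℂ) * bc p m * z^(2*m+p) := by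
    intro m
    have hpt := per_term (bc p m) z p (2*m+p)
    have hc : (((2*m+p : ℕ):ℂ))^2 - (p:ℂ)^2 = ((4*m*(m+p) : ℕ):ℂ) := by push_cast; ring
    rw [hpt, hc]
  rw [tsum_congr hterm, Summable.tsum_add (summable_f p z) (summable_g p z)]
  rw [Summable.tsum_eq_zero_add (summable_g p z)]
  have hg0 : ((4*0*(0+p) : ℕ):ℂ) * bc p 0 * z^(2*0+p) = 0 := by norm_num
  rw [hg0, zero_add]
  have hgs : ∀ m : ℕ, ((4*(m+1)*((m+1)+p) : ℕ):ℂ) * bc p (m+1) * z^(2*(m+1)+p)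
      = -(bc p m * z^(2*m+p+2)) := by
    intro m
    have e : 2*(m+1)+p = 2*m+p+2 := by ring
    rw [e]
    have := bc_rec p m
    rw [show (4*(m+1)*((m+1)+p) : ℕ) = (4*(m+1)*(m+1+p) : ℕ) by ring, this]
    ring
  rw [tsum_congr hgs, tsum_neg]
  ring

lemma conj_bc (p m : ℕ) : (starRingEnd ℂ) (bc p m) = bc p m := by
  unfold bc
  simp [map_div₀, map_pow, map_mul, map_ofNat]

lemma conj_besselJ (p : ℕ) (z : ℂ) :
    (starRingEnd ℂ) (besselJ p z) = besselJ p ((starRingEnd ℂ) z) := by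
  rw [besselJ_eq, besselJ_eq]
  rw [show (starRingEnd ℂ) = (Complex.conjCLE : ℂ → ℂ) from rfl, ContinuousLinearEquiv.map_tsum]
  congr 1; funext m
  simp only [Complex.conjCLE_apply, map_mul, map_pow, conj_bc]

lemma conj_bJ1 (p : ℕ) (z : ℂ) :
    (starRingEnd ℂ) (bJ1 p z) = bJ1 p ((starRingEnd ℂ) z) := by
  unfold bJ1
  rw [show (starRingEnd ℂ) = (Complex.conjCLE : ℂ → ℂ) from rfl, ContinuousLinearEquiv.map_tsum]
  congr 1; funext m
  simp only [Complex.conjCLE_apply, map_mul, map_pow, conj_bc, Complex.conj_natCast]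

lemma conj_bJ2 (p : ℕ) (z : ℂ) :
    (starRingEnd ℂ) (bJ2 p z) = bJ2 p ((starRingEnd ℂ) z) := by
  unfold bJ2
  rw [show (starRingEnd ℂ) = (Complex.conjCLE : ℂ → ℂ) from rfl, ContinuousLinearEquiv.map_tsum]
  congr 1; funext m
  simp only [Complex.conjCLE_apply, map_mul, map_pow, conj_bc, Complex.conj_natCast]

lemma conj_bG (p : ℕ) (z : ℂ) :
    (starRingEnd ℂ) (bG p z) = bG p ((starRingEnd ℂ) z) := by
  unfold bG
  rw [show (starRingEnd ℂ) = (Complex.conjCLE : ℂ → ℂ) from rfl, ContinuousLinearEquiv.map_tsum]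
  congr 1; funext m
  simp only [Complex.conjCLE_apply, map_mul, map_pow, conj_bc]

-- real-valuedness on the real axis
lemma besselJ_ofReal (p : ℕ) (t : ℝ) : besselJ p (t:ℂ) = ((besselJ p (t:ℂ)).re : ℂ) := by
  have h := conj_besselJ p (t:ℂ)
  rw [Complex.conj_ofReal] at h
  have him : (besselJ p (t:ℂ)).im = 0 := by
    have := Complex.conj_eq_iff_im.mp h
    exact this
  exact (Complex.conj_eq_iff_re.mp h).symm

lemma bJ1_ofReal (p : ℕ) (t : ℝ) : bJ1 p (t:ℂ) = ((bJ1 p (t:ℂ)).re : ℂ) := by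
  have h := conj_bJ1 p (t:ℂ)
  rw [Complex.conj_ofReal] at h
  exact (Complex.conj_eq_iff_re.mp h).symm

lemma bJ2_ofReal (p : ℕ) (t : ℝ) : bJ2 p (t:ℂ) = ((bJ2 p (t:ℂ)).re : ℂ) := by
  have h := conj_bJ2 p (t:ℂ)
  rw [Complex.conj_ofReal] at h
  exact (Complex.conj_eq_iff_re.mp h).symm

lemma bG_ofReal (p : ℕ) (t : ℝ) : bG p (t:ℂ) = ((bG p (t:ℂ)).re : ℂ) := by
  have h := conj_bG p (t:ℂ)
  rw [Complex.conj_ofReal] at h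
  exact (Complex.conj_eq_iff_re.mp h).symm

-- besselJ as z^p * bG
lemma besselJ_eq_pow_mul (p : ℕ) (z : ℂ) : besselJ p z = z^p * bG p z := by
  rw [besselJ_eq, bG, ← tsum_mul_left]
  congr 1; funext m
  rw [pow_add]
  ring

lemma bG_zero (p : ℕ) : bG p 0 = bc p 0 := by
  rw [bG]
  rw [tsum_eq_single 0]
  · norm_num
  · intro m hm
    rw [zero_pow (by omega : 2*m ≠ 0), mul_zero]

lemma bc_zero_re (p : ℕ) : (bc p 0).re = 1 / ((Nat.factorial p : ℝ) * 2^p) := by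
  have : bc p 0 = ((1 / ((Nat.factorial p : ℝ) * 2^p) : ℝ) : ℂ) := by
    unfold bc
    push_cast
    norm_num
    ring
  rw [this, Complex.ofReal_re]

lemma bc_zero_re_pos (p : ℕ) : 0 < (bc p 0).re := by
  rw [bc_zero_re]
  have : (0:ℝ) < (Nat.factorial p : ℝ) := by exact_mod_cast Nat.factorial_pos p
  positivity

section NCZ
variable (p : ℕ)

private noncomputable def jr (t : ℝ) : ℝ := (besselJ p (t:ℂ)).re
private noncomputable def j1r (t : ℝ) : ℝ := (bJ1 p (t:ℂ)).re
private noncomputable def j2r (t : ℝ) : ℝ := (bJ2 p (t:ℂ)).re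
private noncomputable def gr (t : ℝ) : ℝ := (bG p (t:ℂ)).re
private noncomputable def vv (t : ℝ) : ℝ := t^2 * (j1r p t)^2 + (t^2 - (p:ℝ)^2) * (jr p t)^2

lemma hdjr (t : ℝ) : HasDerivAt (jr p) (j1r p t) t :=
  (hasDerivAt_besselJ p (t:ℂ)).real_of_complex

lemma hdj1r (t : ℝ) : HasDerivAt (j1r p) (j2r p t) t :=
  (hasDerivAt_bJ1 p (t:ℂ)).real_of_complex

lemma ode_real (t : ℝ) : t^2 * j2r p t + t * j1r p t + (t^2 - (p:ℝ)^2) * jr p t = 0 := by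
  have h := bessel_ode p (t:ℂ)
  rw [besselJ_ofReal, bJ1_ofReal, bJ2_ofReal] at h
  have h2 : (((t^2 * j2r p t + t * j1r p t + (t^2 - (p:ℝ)^2) * jr p t : ℝ)) : ℂ) = 0 := by
    push_cast
    rw [jr, j1r, j2r]
    linear_combination h
  exact_mod_cast h2

lemma hdvv (t : ℝ) : HasDerivAt (vv p) (2 * t * (jr p t)^2) t := by
  have h1 : HasDerivAt (fun x : ℝ => x^2 * (j1r p x)^2)
      ((2:ℕ) * t^(2-1) * (j1r p t)^2 + t^2 * ((2:ℕ) * (j1r p t)^(2-1) * (j2r p t))) t :=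
    (hasDerivAt_pow 2 t).mul ((hdj1r p t).pow 2)
  have h2 : HasDerivAt (fun x : ℝ => (x^2 - (p:ℝ)^2) * (jr p x)^2)
      ((2:ℕ) * t^(2-1) * (jr p t)^2 + (t^2 - (p:ℝ)^2) * ((2:ℕ) * (jr p t)^(2-1) * (j1r p t))) t :=
    ((hasDerivAt_pow 2 t).sub_const ((p:ℝ)^2)).mul ((hdjr p t).pow 2)
  have h3 := h1.add h2
  refine h3.congr_deriv ?_
  push_cast
  linear_combination (2 * j1r p t) * (ode_real p t)

lemma jr_ne_small (t : ℝ) (htn : t ≠ 0) (hsm : 0 < gr p t) : jr p t ≠ 0 := by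
  have : jr p t = t^p * (bG p (t:ℂ)).re := by
    rw [jr, besselJ_eq_pow_mul, ← Complex.ofReal_pow]
    simp [Complex.mul_re, ← Complex.ofReal_pow]
  rw [this]
  exact mul_ne_zero (pow_ne_zero _ htn) (ne_of_gt hsm)

lemma no_common_zero (t0 : ℝ) (ht0 : t0 ≠ 0)
    (hJ : besselJ p (t0:ℂ) = 0) (hJ' : bJ1 p (t0:ℂ) = 0) : False := by
  have hjrt0 : jr p t0 = 0 := by rw [jr, hJ]; simp
  have hj1rt0 : j1r p t0 = 0 := by rw [j1r, hJ']; simp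
  have hvt0 : vv p t0 = 0 := by rw [vv, hjrt0, hj1rt0]; ring
  have hv0 : vv p 0 = 0 := by
    rw [vv]
    rcases Nat.eq_zero_or_pos p with hp | hp
    · subst hp; norm_num
    · have : jr p 0 = 0 := by
        rw [jr, Complex.ofReal_zero, besselJ_eq_pow_mul, zero_pow (Nat.pos_iff_ne_zero.mp hp), zero_mul]
        simp
      rw [this]; ring
  -- continuity of gr at 0 and positivity near 0
  have hgc : ContinuousAt (gr p) 0 := by
    unfold gr
    apply Complex.continuous_re.continuousAt.comp
    exact ((hasDerivAt_bG p ((0:ℝ):ℂ)).differentiableAt.continuousAt).comp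
      Complex.continuous_ofReal.continuousAt
  have hpos0 : 0 < gr p 0 := by
    rw [gr, Complex.ofReal_zero, bG_zero]; exact bc_zero_re_pos p
  have hev : ∀ᶠ s in 𝓝 (0:ℝ), 0 < gr p s := hgc (lt_mem_nhds hpos0)
  obtain ⟨δ, hδ, hball⟩ := Metric.eventually_nhds_iff.mp hev
  have hcont : ContinuousOn (vv p) (Icc (min 0 t0) (max 0 t0)) :=
    fun t _ => (hdvv p t).continuousAt.continuousWithinAt
  have hdiff : DifferentiableOn ℝ (vv p) (interior (Icc (min 0 t0) (max 0 t0))) :=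
    fun t _ => (hdvv p t).differentiableAt.differentiableWithinAt
  rcases lt_or_gt_of_ne ht0 with hneg | hpos
  · -- t0 < 0 : antitone on [t0, 0]
    have hmin : min 0 t0 = t0 := min_eq_right hneg.le
    have hmax : max 0 t0 = 0 := max_eq_left hneg.le
    rw [hmin, hmax] at hcont hdiff
    have hanti : AntitoneOn (vv p) (Icc t0 0) := by
      apply antitoneOn_of_deriv_nonpos (convex_Icc t0 0) hcont hdiff
      intro t ht
      rw [interior_Icc] at ht
      rw [(hdvv p t).deriv]
      nlinarith [sq_nonneg (jr p t), ht.2]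
    have hzero : ∀ t ∈ Icc t0 (0:ℝ), vv p t = 0 := by
      intro t ht
      have hu : vv p t ≤ 0 := hvt0 ▸ hanti (left_mem_Icc.mpr hneg.le) ht ht.1
      have hl : 0 ≤ vv p t := hv0 ▸ hanti ht (right_mem_Icc.mpr hneg.le) ht.2
      linarith
    have hjr0 : ∀ t ∈ Ioo t0 (0:ℝ), jr p t = 0 := by
      intro t ht
      have hevv : vv p =ᶠ[𝓝 t] (fun _ => (0:ℝ)) := by
        filter_upwards [Ioo_mem_nhds ht.1 ht.2] with x hx
        exact hzero x (Ioo_subset_Icc_self hx)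
      have hd0 : deriv (vv p) t = 0 := by rw [hevv.deriv_eq]; exact deriv_const t 0
      rw [(hdvv p t).deriv] at hd0
      have htne : t ≠ 0 := ne_of_lt ht.2
      have : (jr p t)^2 = 0 := by
        rcases mul_eq_zero.mp hd0 with h | h
        · rcases mul_eq_zero.mp h with h' | h'
          · norm_num at h'
          · exact absurd h' htne
        · exact h
      exact pow_eq_zero_iff (by norm_num) |>.mp this
    set t := max (-(δ/2)) (t0/2) with htdef
    have ht1 : t < 0 := by
      apply max_lt (by linarith) (by linarith)
    have ht2 : t0 < t := by
      have : t0/2 ≤ t := le_max_right _ _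
      linarith
    have htδ : dist t 0 < δ := by
      rw [Real.dist_eq, sub_zero, abs_of_neg ht1]
      have : -(δ/2) ≤ t := le_max_left _ _
      linarith
    exact jr_ne_small p t (ne_of_lt ht1) (hball htδ) (hjr0 t ⟨ht2, ht1⟩)
  · -- t0 > 0 : monotone on [0, t0]
    have hmin : min 0 t0 = 0 := min_eq_left hpos.le
    have hmax : max 0 t0 = t0 := max_eq_right hpos.le
    rw [hmin, hmax] at hcont hdiff
    have hmono : MonotoneOn (vv p) (Icc 0 t0) := by
      apply monotoneOn_of_deriv_nonneg (convex_Icc 0 t0) hcont hdiff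
      intro t ht
      rw [interior_Icc] at ht
      rw [(hdvv p t).deriv]
      nlinarith [sq_nonneg (jr p t), ht.1]
    have hzero : ∀ t ∈ Icc (0:ℝ) t0, vv p t = 0 := by
      intro t ht
      have hu : vv p t ≤ 0 := hvt0 ▸ hmono ht (right_mem_Icc.mpr hpos.le) ht.2
      have hl : 0 ≤ vv p t := hv0 ▸ hmono (left_mem_Icc.mpr hpos.le) ht ht.1
      linarith
    have hjr0 : ∀ t ∈ Ioo (0:ℝ) t0, jr p t = 0 := by
      intro t ht
      have hevv : vv p =ᶠ[𝓝 t] (fun _ => (0:ℝ)) := by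
        filter_upwards [Ioo_mem_nhds ht.1 ht.2] with x hx
        exact hzero x (Ioo_subset_Icc_self hx)
      have hd0 : deriv (vv p) t = 0 := by rw [hevv.deriv_eq]; exact deriv_const t 0
      rw [(hdvv p t).deriv] at hd0
      have htne : t ≠ 0 := ne_of_gt ht.1
      have : (jr p t)^2 = 0 := by
        rcases mul_eq_zero.mp hd0 with h | h
        · rcases mul_eq_zero.mp h with h' | h'
          · norm_num at h'
          · exact absurd h' htne
        · exact h
      exact pow_eq_zero_iff (by norm_num) |>.mp this
    set t := min (δ/2) (t0/2) with htdef
    have ht1 : 0 < t := lt_min (by linarith) (by linarith)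
    have ht2 : t < t0 := by
      have : t ≤ t0/2 := min_le_right _ _
      linarith
    have htδ : dist t 0 < δ := by
      rw [Real.dist_eq, sub_zero, abs_of_pos ht1]
      have : t ≤ δ/2 := min_le_left _ _
      linarith
    exact jr_ne_small p t (ne_of_gt ht1) (hball htδ) (hjr0 t ⟨ht1, ht2⟩)

end NCZ

lemma Fp_eq (p : ℕ) (κ : ℂ) (n : ℝ) :
    Fp p κ n = κ * (bJ1 p κ * besselJ p ((Real.sqrt n : ℂ) * κ)
      - (Real.sqrt n : ℂ) * besselJ p κ * bJ1 p ((Real.sqrt n : ℂ) * κ)) := by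
  rw [Fp, besselJ'_eq]

lemma hasDerivAt_Fp_kappa (p : ℕ) (n : ℝ) (hn : 0 < n) (w : ℂ) (hw : w ≠ 0) :
    HasDerivAt (fun z => Fp p z n)
      (((n:ℂ) - 1) * w * besselJ p w * besselJ p ((Real.sqrt n : ℂ) * w)) w := by
  set s : ℂ := ((Real.sqrt n : ℝ) : ℂ) with hsdef
  have hs2 : s^2 = (n:ℂ) := by
    rw [hsdef, ← Complex.ofReal_pow]
    norm_cast
    exact Real.sq_sqrt hn.le
  have hs0 : s ≠ 0 := by
    rw [hsdef]
    exact_mod_cast Complex.ofReal_ne_zero.mpr (ne_of_gt (Real.sqrt_pos.mpr hn))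
  have hfun : (fun z => Fp p z n) = fun z => z * (bJ1 p z * besselJ p (s * z)
      - s * besselJ p z * bJ1 p (s * z)) := by
    funext z; rw [Fp_eq]
  rw [hfun]
  -- build derivative
  have hcomp1 : HasDerivAt (fun z : ℂ => besselJ p (s * z)) (s * bJ1 p (s * w)) w := by
    have h : HasDerivAt (fun z : ℂ => besselJ p (s * z)) (bJ1 p (s * w) * (s * 1)) w :=
      (hasDerivAt_besselJ p (s * w)).comp w ((hasDerivAt_id w).const_mul s)
    convert h using 1
    ring
  have hcomp2 : HasDerivAt (fun z : ℂ => bJ1 p (s * z)) (s * bJ2 p (s * w)) w := by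
    have h : HasDerivAt (fun z : ℂ => bJ1 p (s * z)) (bJ2 p (s * w) * (s * 1)) w :=
      (hasDerivAt_bJ1 p (s * w)).comp w ((hasDerivAt_id w).const_mul s)
    convert h using 1
    ring
  have hW : HasDerivAt (fun z : ℂ => bJ1 p z * besselJ p (s * z) - s * besselJ p z * bJ1 p (s * z))
      (bJ2 p w * besselJ p (s*w) + bJ1 p w * (s * bJ1 p (s*w))
        - ((s * bJ1 p w) * bJ1 p (s*w) + (s * besselJ p w) * (s * bJ2 p (s*w)))) w := by
    have h1 := (hasDerivAt_bJ1 p w).mul hcomp1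
    have h2 := (((hasDerivAt_besselJ p w).const_mul s).mul hcomp2)
    have := h1.sub h2
    exact this
  have hmain := (hasDerivAt_id w).mul hW
  refine hmain.congr_deriv ?_
  have eq1 := bessel_ode p w
  have eq2 := bessel_ode p (s * w)
  have key : w * (((n:ℂ) - 1) * w * besselJ p w * besselJ p (s * w)) =
      w * (1 * (bJ1 p w * besselJ p (s * w) - s * besselJ p w * bJ1 p (s * w)) +
        w * (bJ2 p w * besselJ p (s*w) + bJ1 p w * (s * bJ1 p (s*w))
          - ((s * bJ1 p w) * bJ1 p (s*w) + (s * besselJ p w) * (s * bJ2 p (s*w))))) := by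
    linear_combination (- besselJ p (s*w)) * eq1 + (besselJ p w) * eq2
      + (- w^2 * besselJ p w * besselJ p (s*w)) * hs2
  exact (mul_left_cancel₀ hw key).symm

lemma conj_Fp (p : ℕ) (n : ℝ) (w : ℂ) :
    Fp p ((starRingEnd ℂ) w) n = (starRingEnd ℂ) (Fp p w n) := by
  rw [Fp_eq, Fp_eq]
  simp only [map_mul, map_sub, conj_besselJ, conj_bJ1, Complex.conj_ofReal]


/-- complex-valued ITE trajectories intersect the real axis only at IDEs. -/
theorem stmt_2 (p : ℕ) (nst : ℝ) (hnst : 0 < nst) (hnst1 : nst ≠ 1) (ε : ℝ) (hε : 0 < ε)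
    (κ : ℝ → ℂ) (hcont : ContinuousOn κ (Set.Ioo (nst - ε) (nst + ε)))
    (hF : ∀ n ∈ Set.Ioo (nst - ε) (nst + ε), Fp p (κ n) n = 0)
    (him : ∀ n ∈ Set.Ioo (nst - ε) (nst + ε), n ≠ nst → (κ n).im ≠ 0)
    (hreal : (κ nst).im = 0) (hne : κ nst ≠ 0) :
    besselJ p (κ nst) = 0 ∧ besselJ p ((Real.sqrt nst : ℂ) * κ nst) = 0 := by
  have hnstIoo : nst ∈ Set.Ioo (nst - ε) (nst + ε) := ⟨by linarith, by linarith⟩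
  set κ0 : ℂ := κ nst with hκ0def
  set s : ℂ := ((Real.sqrt nst : ℝ) : ℂ) with hsdef
  have hs0 : s ≠ 0 := by
    rw [hsdef]
    exact Complex.ofReal_ne_zero.mpr (ne_of_gt (Real.sqrt_pos.mpr hnst))
  have hk0 : ((κ0.re : ℝ) : ℂ) = κ0 := by
    rw [← Complex.re_add_im κ0, hreal]
    simp
  have hx0 : κ0.re ≠ 0 := by
    intro h
    apply hne
    rw [← hk0, h, Complex.ofReal_zero]
  have hFnst := hF nst hnstIoo
  rw [Fp_eq] at hFnst
  simp only [← hκ0def, ← hsdef] at hFnst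
  by_cases hJz : besselJ p κ0 = 0 <;> by_cases hJsz : besselJ p (s * κ0) = 0
  · exact ⟨hJz, hJsz⟩
  · -- J(κ0) = 0, J(sκ0) ≠ 0 : common zero of J, J' at κ0
    exfalso
    rw [hJz] at hFnst
    have hb : bJ1 p κ0 = 0 := by
      have h2 : bJ1 p κ0 * besselJ p (s * κ0) = 0 := by
        rcases mul_eq_zero.mp hFnst with h | h
        · exact absurd h hne
        · rwa [mul_zero, zero_mul, sub_zero] at h
      rcases mul_eq_zero.mp h2 with h | h
      · exact h
      · exact absurd h hJsz
    exact no_common_zero p κ0.re hx0 (by rw [hk0]; exact hJz) (by rw [hk0]; exact hb)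
  · -- J(κ0) ≠ 0, J(sκ0) = 0 : common zero at s*κ0
    exfalso
    rw [hJsz] at hFnst
    have hb : bJ1 p (s * κ0) = 0 := by
      have h2 : s * besselJ p κ0 * bJ1 p (s * κ0) = 0 := by
        rcases mul_eq_zero.mp hFnst with h | h
        · exact absurd h hne
        · rw [mul_zero, zero_sub, neg_eq_zero] at h
          exact h
      rcases mul_eq_zero.mp h2 with h | h
      · rcases mul_eq_zero.mp h with h' | h'
        · exact absurd h' hs0
        · exact absurd h' hJz
      · exact h
    have hsk : ((Real.sqrt nst * κ0.re : ℝ) : ℂ) = s * κ0 := by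
      push_cast
      rw [hk0]
    have hskne : Real.sqrt nst * κ0.re ≠ 0 :=
      mul_ne_zero (ne_of_gt (Real.sqrt_pos.mpr hnst)) hx0
    exact no_common_zero p (Real.sqrt nst * κ0.re) hskne
      (by rw [hsk]; exact hJsz) (by rw [hsk]; exact hb)
  · -- both nonzero: IFT contradiction
    exfalso
    -- the two-variable function
    set Φ : ℝ × ℂ → ℂ := fun q => Fp p q.2 q.1 with hΦdef
    set pt : ℝ × ℂ := (nst, κ0) with hptdef
    have hΦeq : Φ = fun q : ℝ × ℂ => q.2 * (bJ1 p q.2 * besselJ p ((Real.sqrt q.1 : ℂ) * q.2)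
        - (Real.sqrt q.1 : ℂ) * besselJ p q.2 * bJ1 p ((Real.sqrt q.1 : ℂ) * q.2)) := by
      funext q; simp only [hΦdef]; rw [Fp_eq]
    -- ContDiffAt
    have hJR : ContDiff ℝ 1 (besselJ p) := ((besselJ_diff p).contDiff).restrict_scalars ℝ
    have hJ1R : ContDiff ℝ 1 (bJ1 p) := ((bJ1_diff p).contDiff).restrict_scalars ℝ
    have hc : ContDiffAt ℝ 1 (fun x : ℝ => ((Real.sqrt x : ℝ) : ℂ)) nst :=
      Complex.ofRealCLM.contDiff.contDiffAt.comp nst (Real.contDiffAt_sqrt hnst.ne')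
    have hinner : ContDiffAt ℝ 1 (fun q : ℝ × ℂ => (Real.sqrt q.1 : ℂ) * q.2) pt :=
      ((hc.comp pt contDiffAt_fst).mul contDiffAt_snd)
    have hcf : ContDiffAt ℝ 1 (fun q : ℝ × ℂ => ((Real.sqrt q.1 : ℝ) : ℂ)) pt := hc.comp pt contDiffAt_fst
    have hΦcd : ContDiffAt ℝ 1 Φ pt := by
      rw [hΦeq]
      exact contDiffAt_snd.mul
        (((hJ1R.contDiffAt.comp pt contDiffAt_snd).mul
            (hJR.contDiffAt.comp pt hinner)).sub
          ((hcf.mul (hJR.contDiffAt.comp pt contDiffAt_snd)).mul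
            (hJ1R.contDiffAt.comp pt hinner)))
    have hΦdiff : DifferentiableAt ℝ Φ pt := hΦcd.differentiableAt one_ne_zero
    set L : (ℝ × ℂ) →L[ℝ] ℂ := fderiv ℝ Φ pt with hLdef
    set B : ℂ := ((nst:ℂ) - 1) * κ0 * besselJ p κ0 * besselJ p (s * κ0) with hBdef
    have hB0 : B ≠ 0 := by
      rw [hBdef]
      apply mul_ne_zero (mul_ne_zero (mul_ne_zero ?_ hne) hJz) hJsz
      rw [sub_ne_zero]
      exact fun h => hnst1 (by exact_mod_cast h)
    -- partial derivative in κ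
    have hψ : HasDerivAt (fun w => Φ (nst, w)) B κ0 := by
      rw [hΦdef, hBdef]
      exact hasDerivAt_Fp_kappa p nst hnst κ0 hne
    set mulB : ℂ →L[ℝ] ℂ := (ContinuousLinearMap.mul ℝ ℂ) B with hmulBdef
    have hψF : HasFDerivAt (fun w => Φ (nst, w)) mulB κ0 := by
      have h := (hψ.hasFDerivAt).restrictScalars ℝ
      have heq : (ContinuousLinearMap.toSpanSingleton ℂ B).restrictScalars ℝ = mulB := by
        ext x
        simp [hmulBdef, smul_eq_mul, mul_comm]
      rwa [heq] at h
    have hι : HasFDerivAt (fun w : ℂ => ((nst, w) : ℝ × ℂ)) (ContinuousLinearMap.inr ℝ ℝ ℂ) κ0 :=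
      HasFDerivAt.prodMk (hasFDerivAt_const nst κ0) (hasFDerivAt_id κ0)
    have hcomp : HasFDerivAt (fun w => Φ (nst, w)) (L.comp (ContinuousLinearMap.inr ℝ ℝ ℂ)) κ0 :=
      (hΦdiff.hasFDerivAt).comp κ0 hι
    have hLinr : L.comp (ContinuousLinearMap.inr ℝ ℝ ℂ) = mulB := hcomp.unique hψF
    set A : ℝ →L[ℝ] ℂ := L.comp (ContinuousLinearMap.inl ℝ ℝ ℂ) with hAdef
    have hL : ∀ v : ℝ × ℂ, L v = A v.1 + B * v.2 := by
      intro v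
      have hv : v = ((v.1, 0) : ℝ × ℂ) + ((0, v.2) : ℝ × ℂ) := by
        ext <;> simp
      calc L v = L ((v.1, 0) + (0, v.2)) := by rw [← hv]
        _ = L (v.1, 0) + L (0, v.2) := map_add L _ _
        _ = A v.1 + mulB v.2 := by
            rw [← hLinr]
            rfl
        _ = A v.1 + B * v.2 := rfl
    -- the equivalence
    set f₁ : (ℝ × ℂ) →L[ℝ] (ℝ × ℂ) := (ContinuousLinearMap.fst ℝ ℝ ℂ).prod L with hf₁def
    set f₂ : (ℝ × ℂ) →L[ℝ] (ℝ × ℂ) := (ContinuousLinearMap.fst ℝ ℝ ℂ).prod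
      (((ContinuousLinearMap.mul ℝ ℂ) B⁻¹).comp
        ((ContinuousLinearMap.snd ℝ ℝ ℂ) - A.comp (ContinuousLinearMap.fst ℝ ℝ ℂ))) with hf₂def
    have hinv1 : Function.LeftInverse f₂ f₁ := by
      intro v
      have : f₂ (f₁ v) = (v.1, B⁻¹ * (L v - A v.1)) := rfl
      rw [this, hL v]
      ext
      · rfl
      · show (B⁻¹ * (A v.1 + B * v.2 - A v.1)) = v.2
        field_simp
        ring
    have hinv2 : Function.RightInverse f₂ f₁ := by
      intro v
      have : f₁ (f₂ v) = (v.1, L (v.1, B⁻¹ * (v.2 - A v.1))) := rfl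
      rw [this, hL (v.1, B⁻¹ * (v.2 - A v.1))]
      ext
      · rfl
      · show A v.1 + B * (B⁻¹ * (v.2 - A v.1)) = v.2
        field_simp
        ring
    set e : (ℝ × ℂ) ≃L[ℝ] (ℝ × ℂ) := ContinuousLinearEquiv.equivOfInverse f₁ f₂ hinv1 hinv2 with hedef
    set g : ℝ × ℂ → ℝ × ℂ := fun q => (q.1, Φ q) with hgdef
    have hgF : HasFDerivAt g f₁ pt := HasFDerivAt.prodMk hasFDerivAt_fst (hΦdiff.hasFDerivAt)
    have hgcd : ContDiffAt ℝ 1 g pt := contDiffAt_fst.prodMk hΦcd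
    have hstrict : HasStrictFDerivAt g ((e : (ℝ × ℂ) ≃L[ℝ] (ℝ × ℂ)) : (ℝ × ℂ) →L[ℝ] (ℝ × ℂ)) pt :=
      hgcd.hasStrictFDerivAt' hgF one_ne_zero
    set P := hstrict.toOpenPartialHomeomorph g with hPdef
    have hPcoe : ⇑P = g := hstrict.toOpenPartialHomeomorph_coe
    have hPsrc : pt ∈ P.source := hstrict.mem_toOpenPartialHomeomorph_source
    -- eventual membership
    have hκc : ContinuousAt κ nst := hcont.continuousAt (Ioo_mem_nhds hnstIoo.1 hnstIoo.2)
    have hm1 : ContinuousAt (fun n : ℝ => ((n, κ n) : ℝ × ℂ)) nst :=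
      continuousAt_id.prodMk hκc
    have hconjκ0 : (starRingEnd ℂ) κ0 = κ0 := Complex.conj_eq_iff_im.mpr hreal
    have hm2 : ContinuousAt (fun n : ℝ => ((n, (starRingEnd ℂ) (κ n)) : ℝ × ℂ)) nst :=
      continuousAt_id.prodMk (Complex.continuous_conj.continuousAt.comp hκc)
    have hm2pt : ((nst, (starRingEnd ℂ) (κ nst)) : ℝ × ℂ) = pt := by
      rw [hptdef]
      exact congrArg (Prod.mk nst) hconjκ0
    have hev1 : ∀ᶠ n in 𝓝 nst, ((n, κ n) : ℝ × ℂ) ∈ P.source :=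
      hm1.eventually_mem (P.open_source.mem_nhds hPsrc)
    have hev2 : ∀ᶠ n in 𝓝 nst, ((n, (starRingEnd ℂ) (κ n)) : ℝ × ℂ) ∈ P.source := by
      apply hm2.eventually_mem
      rw [hm2pt]
      exact P.open_source.mem_nhds hPsrc
    have hev3 : ∀ᶠ n in 𝓝 nst, n ∈ Set.Ioo (nst - ε) (nst + ε) :=
      Ioo_mem_nhds hnstIoo.1 hnstIoo.2
    have hall := (hev1.and hev2).and hev3
    have hallp : ∀ᶠ n in 𝓝[≠] nst, (((n, κ n) : ℝ × ℂ) ∈ P.source ∧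
        ((n, (starRingEnd ℂ) (κ n)) : ℝ × ℂ) ∈ P.source) ∧ n ∈ Set.Ioo (nst - ε) (nst + ε) :=
      hall.filter_mono nhdsWithin_le_nhds
    obtain ⟨n, ⟨⟨hn1, hn2⟩, hnIoo⟩, hnne'⟩ := (hallp.and self_mem_nhdsWithin).exists
    have hnne : n ≠ nst := hnne'
    -- both points are mapped by g to (n, 0)
    have hg1 : g (n, κ n) = (n, 0) := by
      simp only [hgdef, hΦdef]
      rw [hF n hnIoo]
    have hg2 : g (n, (starRingEnd ℂ) (κ n)) = (n, 0) := by
      simp only [hgdef, hΦdef]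
      rw [conj_Fp, hF n hnIoo, map_zero]
    have hinj := P.injOn
    rw [hPcoe] at hinj
    have : ((n, κ n) : ℝ × ℂ) = (n, (starRingEnd ℂ) (κ n)) :=
      hinj hn1 hn2 (by rw [hg1, hg2])
    have him0 : (κ n).im = 0 := by
      have h2 : κ n = (starRingEnd ℂ) (κ n) := congrArg Prod.snd this
      exact Complex.conj_eq_iff_im.mp h2.symm
    exact him n hnIoo hnne him0
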